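/- Let L be a finite-dimensional Lie algebra over a field F of characteristic zero with Levi decomposition L = R ⋊ S, where R is the solvable radical. If every c-section of every maximal subalgebra of L is solvable, then every simple ideal S_j of the Levi factor S has the property that every proper subalgebra of S_j is solvable. -/

import Mathlib

/-- `M` is a maximal (proper) subalgebra of `L`. -/
def IsMaximalSubalgebra {F : Type*} [Field F] {L : Type*} [LieRing L] [LieAlgebra F L]
    (M : LieSubalgebra F L) : Prop :=
  M ≠ ⊤ ∧ ∀ K : LieSubalgebra F L, M < K → K = ⊤

/-- `C/D` is a chief factor of `L`: `D < C` are ideals of `L` and there is no ideal of `L`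
strictly between them (equivalently, `C/D` is a minimal nonzero ideal of `L/D`). -/
def IsChiefFactor {F : Type*} [Field F] {L : Type*} [LieRing L] [LieAlgebra F L]
    (D C : LieIdeal F L) : Prop :=
  D < C ∧ ∀ K : LieIdeal F L, D ≤ K → K ≤ C → K = D ∨ K = C

/-- The subquotient `S/(S ∩ D)`, as a Lie algebra; when `D ⊆ S` this is `S/D`. -/
abbrev SubQuot {F : Type*} [Field F] {L : Type*} [LieRing L] [LieAlgebra F L]
    (S : LieSubalgebra F L) (D : LieIdeal F L) :=
  S ⧸ LieIdeal.comap S.incl D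

/-- The core `M_L` of a subalgebra `M`: the largest ideal of `L` contained in `M`. -/
def coreOf {F : Type*} [Field F] {L : Type*} [LieRing L] [LieAlgebra F L]
    (M : LieSubalgebra F L) : LieIdeal F L :=
  sSup {I : LieIdeal F L | (I : Set L) ⊆ M}

lemma exists_maximal_containing {F A : Type*} [Field F] [LieRing A] [LieAlgebra F A]
    [FiniteDimensional F A] (U : LieSubalgebra F A) (hU : U ≠ ⊤) :
    ∃ M : LieSubalgebra F A, IsMaximalSubalgebra M ∧ U ≤ M := by
  obtain ⟨n, hn⟩ : ∃ n, Module.finrank F A - Module.finrank F U ≤ n := ⟨_, le_refl _⟩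
  induction n generalizing U with
  | zero =>
    exfalso
    apply hU
    have h1 : Module.finrank F A ≤ Module.finrank F U := by omega
    exact LieSubalgebra.toSubmodule_injective (Submodule.eq_top_of_finrank_eq
      (le_antisymm (Submodule.finrank_le _) h1))
  | succ n ih =>
    by_cases hmax : IsMaximalSubalgebra U
    · exact ⟨U, hmax, le_refl _⟩
    · have : ∃ K : LieSubalgebra F A, U < K ∧ K ≠ ⊤ := by
        by_contra hc
        push_neg at hc
        exact hmax ⟨hU, fun K hK => hc K hK⟩
      obtain ⟨K, hUK, hK⟩ := this
      have hlt : Module.finrank F U < Module.finrank F K :=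
        Submodule.finrank_lt_finrank_of_lt (by exact_mod_cast hUK)
      obtain ⟨M, hM, hKM⟩ := ih K hK (by omega)
      exact ⟨M, hM, le_of_lt hUK |>.trans hKM⟩

/-- Characteristic zero: if every c-section of every maximal subalgebra of `L` is solvable,
then every simple ideal of a Levi factor `S` has all of its proper subalgebras solvable. -/
theorem simple_levi_ideals_of_solvable_cSections {F : Type*} [Field F] [CharZero F]
    {L : Type*} [LieRing L] [LieAlgebra F L] [FiniteDimensional F L]
    (S : LieSubalgebra F L) [LieAlgebra.IsSemisimple F S]
    (hsup : (LieAlgebra.radical F L).toSubmodule ⊔ S.toSubmodule = ⊤)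
    (hinf : (LieAlgebra.radical F L).toSubmodule ⊓ S.toSubmodule = ⊥)
    (h : ∀ M : LieSubalgebra F L, IsMaximalSubalgebra M →
      ∀ C D : LieIdeal F L, IsChiefFactor D C → (D : Set L) ⊆ (M : Set L) →
        M.toSubmodule ⊔ C.toSubmodule = ⊤ →
          LieAlgebra.IsSolvable (SubQuot (M ⊓ (C : LieSubalgebra F L)) D)) :
    ∀ J : LieIdeal F S, LieAlgebra.IsSimple F J →
      ∀ U : LieSubalgebra F J, U ≠ ⊤ → LieAlgebra.IsSolvable U := by
  intro J hJsimple U0 hU0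
  haveI := hJsimple
  obtain ⟨MJ, hMJmax, hUMJ⟩ := exists_maximal_containing U0 hU0
  suffices hs : LieAlgebra.IsSolvable MJ by
    exact Function.Injective.lieAlgebra_isSolvable (f := LieSubalgebra.inclusion hUMJ)
      (LieSubalgebra.inclusion_injective hUMJ)
  -- setup
  set R : LieIdeal F L := LieAlgebra.radical F L with hR
  set J' : LieIdeal F S := Jᶜ with hJ'
  have hJJ'sup : J ⊔ J' = ⊤ := sup_compl_eq_top
  have hJJ'inf : J ⊓ J' = ⊥ := inf_compl_eq_bot
  -- embeddings
  let ι : J →ₗ⁅F⁆ L := S.incl.comp J.incl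
  let ι' : J' →ₗ⁅F⁆ L := S.incl.comp J'.incl
  have hι : ∀ a : J, ι a = ((a : S) : L) := fun a => rfl
  have hι' : ∀ a : J', ι' a = ((a : S) : L) := fun a => rfl
  have hιinj : Function.Injective ι := fun a b hab => Subtype.ext (Subtype.ext hab)
  -- submodules of L
  set Rs : Submodule F L := R.toSubmodule with hRs
  set Ss : Submodule F L := S.toSubmodule with hSs
  set Js : Submodule F L := LinearMap.range ι.toLinearMap with hJs
  set J's : Submodule F L := LinearMap.range ι'.toLinearMap with hJ's
  have hJsle : Js ≤ Ss := by
    rintro x ⟨a, rfl⟩; exact (a : S).2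
  have hJ'sle : J's ≤ Ss := by
    rintro x ⟨a, rfl⟩; exact (a : S).2
  have hmemJs : ∀ (s : S), (s ∈ J → (s : L) ∈ Js) := by
    intro s hs; exact ⟨⟨s, hs⟩, rfl⟩
  have hmemJ's : ∀ (s : S), (s ∈ J' → (s : L) ∈ J's) := by
    intro s hs; exact ⟨⟨s, hs⟩, rfl⟩
  have hSsdecomp : Js ⊔ J's = Ss := by
    apply le_antisymm (sup_le hJsle hJ'sle)
    rintro x hx
    lift x to S using hx with s hs
    have : s ∈ J ⊔ J' := hJJ'sup ▸ LieSubmodule.mem_top _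
    rw [LieSubmodule.mem_sup] at this
    obtain ⟨a, ha, b, hb, hab⟩ := this
    have : (s : L) = (a : L) + (b : L) := by
      rw [← hab]; rfl
    rw [this]
    exact Submodule.add_mem _ (Submodule.mem_sup_left (hmemJs a ha))
      (Submodule.mem_sup_right (hmemJ's b hb))
  have hJJ'dis : Js ⊓ J's = ⊥ := by
    rw [eq_bot_iff]
    rintro x ⟨⟨a, rfl⟩, ⟨b, hb⟩⟩
    have hab : ((a : S) : L) = ((b : S) : L) := hb.symm
    have h2 : (a : S) = (b : S) := Subtype.ext hab
    have h3 : (a : S) ∈ J ⊓ J' := ⟨a.2, h2 ▸ b.2⟩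
    rw [hJJ'inf] at h3
    have : (a : S) = 0 := h3
    simp [Submodule.mem_bot, hι, this]
  -- the ideal D
  set Ds : Submodule F L := Rs ⊔ J's with hDs
  have hRlie : ∀ (x : L) (r : L), r ∈ Rs → ⁅x, r⁆ ∈ Rs := fun x r hr => R.lie_mem hr
  have hDlie : ∀ (x m : L), m ∈ Ds → ⁅x, m⁆ ∈ Ds := by
    intro x m hm
    obtain ⟨r, hr, j, hj, rfl⟩ := Submodule.mem_sup.mp hm
    rw [lie_add]
    refine Submodule.add_mem _ (Submodule.mem_sup_left (hRlie x r hr)) ?_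
    have hx : x ∈ Rs ⊔ Ss := by rw [hsup]; trivial
    obtain ⟨a, ha, s, hs, rfl⟩ := Submodule.mem_sup.mp hx
    rw [add_lie]
    refine Submodule.add_mem _ ?_ ?_
    · have : ⁅j, a⁆ ∈ Rs := hRlie j a ha
      have h2 : ⁅a, j⁆ = -⁅j, a⁆ := (lie_skew a j).symm
      rw [h2]
      exact Submodule.mem_sup_left (Submodule.neg_mem _ this)
    · obtain ⟨b, rfl⟩ := hj
      have h1 : ⁅(⟨s, hs⟩ : S), (b : S)⁆ ∈ J' := J'.lie_mem b.2
      have h2 : ⁅s, ((b : S) : L)⁆ = ((⁅(⟨s, hs⟩ : S), (b : S)⁆ : S) : L) := rfl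
      have h3 : ⁅s, (ι'.toLinearMap b : L)⁆ = ((⁅(⟨s, hs⟩ : S), (b : S)⁆ : S) : L) := rfl
      rw [h3]
      exact Submodule.mem_sup_right (hmemJ's _ h1)
  set D : LieIdeal F L := { toSubmodule := Ds, lie_mem := fun {x m} hm => hDlie x m hm } with hD
  have hDcoe : D.toSubmodule = Ds := rfl
  -- MJ mapped into L
  set MJs : Submodule F L := Submodule.map ι.toLinearMap MJ.toSubmodule with hMJs
  have hMJsle : MJs ≤ Js := by
    rintro x ⟨a, _, rfl⟩; exact ⟨a, rfl⟩
  -- the subalgebra M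
  have hMlie : ∀ {x y : L}, x ∈ Ds ⊔ MJs → y ∈ Ds ⊔ MJs → ⁅x, y⁆ ∈ Ds ⊔ MJs := by
    intro x y hx hy
    obtain ⟨d, hd, m, hm, rfl⟩ := Submodule.mem_sup.mp hx
    obtain ⟨d', hd', m', hm', rfl⟩ := Submodule.mem_sup.mp hy
    rw [add_lie, lie_add, lie_add]
    refine Submodule.add_mem _ (Submodule.add_mem _ ?_ ?_) (Submodule.add_mem _ ?_ ?_)
    · exact Submodule.mem_sup_left (hDlie d d' hd')
    · rw [(lie_skew d m').symm]
      exact Submodule.mem_sup_left (Submodule.neg_mem _ (hDlie m' d hd))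
    · exact Submodule.mem_sup_left (hDlie m d' hd')
    · obtain ⟨a, ha, rfl⟩ := hm
      obtain ⟨b, hb, rfl⟩ := hm'
      have h1 : ⁅ι.toLinearMap a, ι.toLinearMap b⁆ = ι.toLinearMap ⁅a, b⁆ := (ι.map_lie a b).symm
      rw [h1]
      exact Submodule.mem_sup_right ⟨⁅a, b⁆, MJ.lie_mem ha hb, rfl⟩
  set M : LieSubalgebra F L := ⟨Ds ⊔ MJs, fun hx hy => hMlie hx hy⟩ with hM
  have hMcoe : M.toSubmodule = Ds ⊔ MJs := rfl
  have hDM : D.toSubmodule ≤ M.toSubmodule := by rw [hMcoe]; exact le_sup_left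
  -- key lattice facts
  have hDJdis : Ds ⊓ Js = ⊥ := by
    rw [eq_bot_iff]
    rintro x ⟨hx1, hx2⟩
    obtain ⟨r, hr, j, hj, rfl⟩ := Submodule.mem_sup.mp hx1
    have hrS : r ∈ Ss := by
      rw [← add_sub_cancel_right r j]
      exact Submodule.sub_mem _ (hJsle hx2) (hJ'sle hj)
    have hr0 : r = 0 := by
      have : r ∈ Rs ⊓ Ss := ⟨hr, hrS⟩
      rwa [hinf, Submodule.mem_bot] at this
    rw [hr0, zero_add] at hx2 ⊢
    have : j ∈ Js ⊓ J's := ⟨hx2, hj⟩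
    rwa [hJJ'dis, Submodule.mem_bot] at this
  have hDJtop : Ds ⊔ Js = ⊤ := by
    rw [hDs, sup_assoc, sup_comm J's Js, hSsdecomp, hsup]
  have hmodular : ∀ K : Submodule F L, Ds ≤ K → K = Ds ⊔ (Js ⊓ K) := by
    intro K hK
    rw [← sup_inf_assoc_of_le Js hK, hDJtop, top_inf_eq]
  -- chief factor D < ⊤
  haveI : Nontrivial J := LieModule.nontrivial_of_isIrreducible F J J
  have hJsne : Js ≠ ⊥ := by
    obtain ⟨a, ha⟩ := exists_ne (0 : J)
    intro hbot
    apply ha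
    have h1 : ι a ∈ Js := ⟨a, rfl⟩
    rw [hbot, Submodule.mem_bot] at h1
    exact hιinj (by rw [h1, map_zero ι])
  have hDne : D ≠ ⊤ := by
    intro hDtop
    apply hJsne
    have hDsT : Ds = ⊤ := by rw [← hDcoe, hDtop, LieSubmodule.top_toSubmodule]
    rw [← hDJdis, hDsT, top_inf_eq]
  have hchief : IsChiefFactor D ⊤ := by
    constructor
    · exact lt_top_iff_ne_top.mpr hDne
    · intro K hDK _
      set P : LieIdeal F J :=
        ⟨Submodule.comap ι.toLinearMap K.toSubmodule, fun {x m} hm => by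
          have : ι ⁅x, m⁆ = ⁅ι x, ι m⁆ := ι.map_lie x m
          show ι.toLinearMap ⁅x, m⁆ ∈ K.toSubmodule
          rw [show ι.toLinearMap ⁅x, m⁆ = ⁅ι x, ι m⁆ from this]
          exact K.lie_mem hm⟩ with hP
      have hmapP : Submodule.map ι.toLinearMap P.toSubmodule = Js ⊓ K.toSubmodule := by
        rw [hP]
        exact Submodule.map_comap_eq _ _
      have hDsK : Ds ≤ K.toSubmodule := hDK
      rcases hJsimple.eq_bot_or_eq_top P with hPbot | hPtop
      · left
        apply (LieSubmodule.toSubmodule_inj _ _).mp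
        have : P.toSubmodule = ⊥ := by rw [hPbot]; rfl
        rw [hDcoe, hmodular K.toSubmodule hDsK, ← hmapP, this, Submodule.map_bot, sup_bot_eq]
      · right
        apply (LieSubmodule.toSubmodule_inj _ _).mp
        have hPT : P.toSubmodule = ⊤ := by rw [hPtop]; rfl
        have hJsK : Js ≤ K.toSubmodule := by
          have := hmapP
          rw [hPT, Submodule.map_top] at this
          rw [← hJs] at this
          exact le_of_eq (by rw [this]) |>.trans inf_le_right
        rw [LieSubmodule.top_toSubmodule, eq_top_iff, ← hDJtop]
        exact sup_le hDsK hJsK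
  -- membership of ι a in M for a ∈ MJ
  have hmemM : ∀ a : MJ, ι a ∈ M.toSubmodule :=
    fun a => Submodule.mem_sup_right ⟨(a : J), a.2, rfl⟩
  -- M is not top
  have hMne : M ≠ ⊤ := by
    intro hMtop
    apply hMJmax.1
    have hMsT : (Ds ⊔ MJs) = ⊤ := by
      rw [← hMcoe, hMtop]; rfl
    have hJsMJs : Js = MJs := by
      have h1 : Js = (MJs ⊔ Ds) ⊓ Js := by
        rw [sup_comm, hMsT, top_inf_eq]
      rw [h1, sup_inf_assoc_of_le _ hMJsle, hDJdis, sup_bot_eq]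
    rw [eq_top_iff]
    intro a _
    have : ι a ∈ MJs := by rw [← hJsMJs]; exact ⟨a, rfl⟩
    obtain ⟨b, hb, hba⟩ := this
    have : b = a := hιinj hba
    rwa [← this]
  -- M is maximal
  have hMmax : ∀ K : LieSubalgebra F L, M < K → K = ⊤ := by
    intro K hMK
    set Q : LieSubalgebra F J :=
      ⟨Submodule.comap ι.toLinearMap K.toSubmodule, fun {x y} hx hy => by
        show ι.toLinearMap ⁅x, y⁆ ∈ K.toSubmodule
        rw [show ι.toLinearMap ⁅x, y⁆ = ⁅ι x, ι y⁆ from ι.map_lie x y]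
        exact K.lie_mem hx hy⟩ with hQ
    have hmapQ : Submodule.map ι.toLinearMap Q.toSubmodule = Js ⊓ K.toSubmodule := by
      rw [hQ]
      exact Submodule.map_comap_eq _ _
    have hMJQ : MJ ≤ Q := by
      intro a ha
      exact le_of_lt hMK (hmemM ⟨a, ha⟩)
    have hDsK : Ds ≤ K.toSubmodule := le_trans hDM (le_of_lt hMK)
    by_cases hQtop : Q = ⊤
    · apply LieSubalgebra.toSubmodule_injective
      have hJsK : Js ≤ K.toSubmodule := by
        have := hmapQ
        rw [hQtop] at this
        have h2 : Submodule.map ι.toLinearMap (⊤ : LieSubalgebra F J).toSubmodule = Js := by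
          rw [show ((⊤ : LieSubalgebra F J).toSubmodule) = (⊤ : Submodule F J) from rfl,
            Submodule.map_top]
        rw [h2] at this
        exact le_of_eq this |>.trans inf_le_right
      rw [show ((⊤ : LieSubalgebra F L).toSubmodule) = (⊤ : Submodule F L) from rfl,
        eq_top_iff, ← hDJtop]
      exact sup_le hDsK hJsK
    · exfalso
      have hQMJ : Q = MJ := by
        by_contra hne
        exact hQtop (hMJmax.2 Q (lt_of_le_of_ne hMJQ (Ne.symm hne)))
      apply hMK.ne
      apply LieSubalgebra.toSubmodule_injective
      rw [hMcoe, hmodular K.toSubmodule hDsK, ← hmapQ, hQMJ, ← hMJs]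
  have hDsubM : (D : Set L) ⊆ (M : Set L) := fun x hx => hDM hx
  have hsupM : M.toSubmodule ⊔ (⊤ : LieIdeal F L).toSubmodule = ⊤ := by
    rw [LieSubmodule.top_toSubmodule, sup_top_eq]
  have hsolv := h M ⟨hMne, hMmax⟩ ⊤ D hchief hDsubM hsupM
  have htopcoe : ((⊤ : LieIdeal F L) : LieSubalgebra F L) = ⊤ := by
    apply LieSubalgebra.toSubmodule_injective
    rw [LieIdeal.toLieSubalgebra_toSubmodule, LieSubmodule.top_toSubmodule]
    rfl
  rw [htopcoe, inf_top_eq] at hsolv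
  -- now transfer solvability to MJ
  set DM : LieIdeal F M := LieIdeal.comap M.incl D with hDM'
  let q : M →ₗ⁅F⁆ (SubQuot M D) :=
    { toLinearMap := DM.toSubmodule.mkQ, map_lie' := fun {x y} => rfl }
  let gM : MJ →ₗ⁅F⁆ M :=
    { toFun := fun a => ⟨ι a, hmemM a⟩
      map_add' := fun a b => Subtype.ext (by simp)
      map_smul' := fun c a => Subtype.ext (by
        show ι ((c • a : MJ) : J) = c • (ι (a : J))
        rw [show ((c • a : MJ) : J) = c • (a : J) from rfl, map_smul ι])
      map_lie' := fun {a b} => Subtype.ext (ι.map_lie _ _) }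
  let f : MJ →ₗ⁅F⁆ (SubQuot M D) := q.comp gM
  have hfinj : Function.Injective f := by
    have hker : ∀ a : MJ, f a = 0 → a = 0 := by
      intro a ha
      have h1 : gM a ∈ DM := by
        have := (LieSubmodule.Quotient.mk_eq_zero' (N := DM) (m := gM a)).mp ha
        exact this
      have h2 : ι (a : J) ∈ Ds := by
        rw [hDM', LieIdeal.mem_comap] at h1
        exact h1
      have h3 : ι (a : J) ∈ Js := ⟨a, rfl⟩
      have h4 : ι (a : J) = 0 := by
        have : ι (a : J) ∈ Ds ⊓ Js := ⟨h2, h3⟩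
        rwa [hDJdis, Submodule.mem_bot] at this
      have h5 : (a : J) = 0 := hιinj (by rw [h4, map_zero ι])
      exact Subtype.ext h5
    intro a b hab
    have : f (a - b) = 0 := by rw [map_sub f, hab, sub_self]
    have := hker _ this
    rwa [sub_eq_zero] at this
  haveI := hsolv
  exact Function.Injective.lieAlgebra_isSolvable (f := f) hfinj
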